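/- Let η : [0,1] → A be continuous, let L ∈ A satisfy exp(L) = Hol_η, set h(θ) := Ψ_η(θ)·exp(−θL), and let g₀ ∈ A commute with L (g₀·L = L·g₀). Then the map g(θ) := h(θ)·g₀·h(θ)⁻¹ is C¹, satisfies g'(θ) + η(θ)·g(θ) − g(θ)·η(θ) = 0 for all θ ∈ [0,1], and satisfies g(0) = g(1) = g₀. -/

import Mathlib

open Set

/-- If `exp(L) = Hol_η`, `h(θ) = Ψ_η(θ)·exp(-θL)` and `g₀` commutes with `L`, then
`g(θ) := h(θ)·g₀·h(θ)⁻¹` is a C¹ solution of `g' + ηg - gη = 0` with `g(0) = g(1) = g₀`. -/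
theorem stmt_7 {A : Type*} [NormedRing A] [NormedAlgebra ℝ A] [NormOneClass A]
    [CompleteSpace A] (η Ψ : ℝ → A) (L : A) (g₀ : A) (hη : ContinuousOn η (Icc 0 1))
    -- Ψ is the horizontal path of η; it is pointwise invertible, and Hol_η = Ψ 1
    (hΨ : ∀ θ ∈ Icc (0:ℝ) 1, HasDerivWithinAt Ψ (-(η θ * Ψ θ)) (Icc (0:ℝ) 1) θ)
    (hΨ0 : Ψ 0 = 1)
    (hL : NormedSpace.exp L = Ψ 1)
    (hg₀ : g₀ * L = L * g₀)
    (h : ℝ → A) (hdef : ∀ θ, h θ = Ψ θ * NormedSpace.exp (-(θ • L)))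
    (g : ℝ → A) (gdef : ∀ θ, g θ = h θ * g₀ * Ring.inverse (h θ)) :
    (∃ Dg : ℝ → A,
      (∀ θ ∈ Icc (0:ℝ) 1, HasDerivWithinAt g (Dg θ) (Icc (0:ℝ) 1) θ) ∧
      ContinuousOn Dg (Icc 0 1) ∧
      (∀ θ ∈ Icc (0:ℝ) 1, Dg θ + η θ * g θ - g θ * η θ = 0)) ∧
    g 0 = g₀ ∧ g 1 = g₀ := by
  haveI : Nontrivial A := ⟨⟨1, 0, by
    intro h10
    have : (1:ℝ) = 0 := by
      calc (1:ℝ) = ‖(1:A)‖ := norm_one.symm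
        _ = ‖(0:A)‖ := by rw [h10]
        _ = 0 := norm_zero
    exact one_ne_zero this⟩⟩
  letI : NormedAlgebra ℚ A := NormedAlgebra.restrictScalars ℚ ℝ A
  obtain ⟨M, hM⟩ := isCompact_Icc.exists_bound_of_continuousOn hη
  set φ : ℝ → A := fun t => Ring.inverse (Ψ t) with hφdef
  -- the derivative of φ at units
  have hφderiv : ∀ x ∈ Icc (0:ℝ) 1, IsUnit (Ψ x) →
      HasDerivWithinAt φ (φ x * η x) (Icc (0:ℝ) 1) x := by
    intro x hx hux
    obtain ⟨u, hu⟩ := hux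
    have h1 : HasDerivWithinAt (Ring.inverse ∘ Ψ)
        ((-ContinuousLinearMap.mulLeftRight ℝ A ↑u⁻¹ ↑u⁻¹) (-(η x * Ψ x)))
        (Icc (0:ℝ) 1) x := by
      refine HasFDerivAt.comp_hasDerivWithinAt x ?_ (hΨ x hx)
      rw [← hu]
      exact hasFDerivAt_ringInverse u
    have hφx : φ x = ↑u⁻¹ := by
      simp only [hφdef, ← hu, Ring.inverse_unit]
    convert h1 using 1
    · rfl
    rw [ContinuousLinearMap.neg_apply, ContinuousLinearMap.mulLeftRight_apply, hφx, ← hu,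
      mul_neg, neg_mul, neg_neg, mul_assoc, mul_assoc, Units.mul_inv, mul_one]
  -- the key step : Ψ is a unit everywhere on [0,1]
  have unitAll : ∀ t ∈ Icc (0:ℝ) 1, IsUnit (Ψ t) := by
    set T : Set ℝ := {t | t ∈ Icc (0:ℝ) 1 ∧ ∀ s ∈ Icc 0 t, IsUnit (Ψ s)} with hT
    have hT0 : (0:ℝ) ∈ T := by
      refine ⟨⟨le_refl 0, zero_le_one⟩, fun s hs => ?_⟩
      have : s = 0 := le_antisymm hs.2 hs.1
      rw [this, hΨ0]; exact isUnit_one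
    have hTbdd : BddAbove T := ⟨1, fun t ht => ht.1.2⟩
    set c := sSup T with hc
    have hc0 : 0 ≤ c := le_csSup hTbdd hT0
    have hc1 : c ≤ 1 := csSup_le ⟨0, hT0⟩ fun t ht => ht.1.2
    have hlt : ∀ s, 0 ≤ s → s < c → IsUnit (Ψ s) := by
      intro s hs0 hsc
      obtain ⟨t, htT, hst⟩ := exists_lt_of_lt_csSup ⟨0, hT0⟩ hsc
      exact htT.2 s ⟨hs0, hst.le⟩
    set B := Real.exp |M| with hB
    have hBpos : 0 < B := Real.exp_pos _
    have hbnd : ∀ t, 0 ≤ t → t < c → ‖φ t‖ ≤ B := by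
      intro t ht0 htc
      have htc1 : t ≤ 1 := le_trans htc.le hc1
      have key : ∀ x ∈ Icc (0:ℝ) t, ‖φ x‖ ≤ gronwallBound 1 M 0 (x - 0) := by
        apply norm_le_gronwallBound_of_norm_deriv_right_le
          (f' := fun x => φ x * η x)
        · intro x hx
          have hx1 : x ∈ Icc (0:ℝ) 1 := ⟨hx.1, le_trans hx.2 htc1⟩
          exact (hφderiv x hx1 (hlt x hx.1 (lt_of_le_of_lt hx.2 htc))).continuousWithinAt.mono
            (Icc_subset_Icc le_rfl htc1)
        · intro x hx
          have hx1 : x ∈ Icc (0:ℝ) 1 := ⟨hx.1, le_trans hx.2.le htc1⟩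
          have hx1' : x ∈ Ico (0:ℝ) 1 := ⟨hx.1, lt_of_lt_of_le (lt_of_lt_of_le hx.2 htc.le) hc1⟩
          exact (hφderiv x hx1 (hlt x hx.1 (lt_of_lt_of_le hx.2 htc.le))).mono_of_mem_nhdsWithin
            (Icc_mem_nhdsGE_of_mem hx1')
        · simp [hφdef, hΨ0, Ring.inverse_one]
        · intro x hx
          have hx1 : x ∈ Icc (0:ℝ) 1 := ⟨hx.1, le_trans hx.2.le htc1⟩
          calc ‖φ x * η x‖ ≤ ‖φ x‖ * ‖η x‖ := norm_mul_le _ _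
            _ ≤ ‖φ x‖ * M := by
                refine mul_le_mul_of_nonneg_left (hM x hx1) (norm_nonneg _)
            _ = M * ‖φ x‖ + 0 := by ring
      have := key t ⟨ht0, le_refl t⟩
      rw [gronwallBound_ε0] at this
      refine this.trans ?_
      rw [hB]
      have : M * (t - 0) ≤ |M| := by
        have h1 : M * (t - 0) ≤ |M| * (t - 0) := by
          apply mul_le_mul_of_nonneg_right (le_abs_self M) (by linarith)
        refine h1.trans ?_
        nlinarith [abs_nonneg M]
      nlinarith [Real.exp_le_exp.2 this, Real.exp_pos (M * (t - 0))]
    -- Ψ c is a unit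
    have hcu : IsUnit (Ψ c) := by
      rcases eq_or_lt_of_le hc0 with hc0' | hc0'
      · rw [← hc0', hΨ0]; exact isUnit_one
      · have hΨcont : ContinuousWithinAt Ψ (Icc 0 1) c := (hΨ c ⟨hc0, hc1⟩).continuousWithinAt
        rw [Metric.continuousWithinAt_iff] at hΨcont
        obtain ⟨δ, hδ0, hδ⟩ := hΨcont (B⁻¹) (by positivity)
        set t := max 0 (c - δ/2) with ht
        have ht0 : 0 ≤ t := le_max_left _ _
        have htc : t < c := by
          rw [ht]; rcases max_cases 0 (c - δ/2) with ⟨he, _⟩ | ⟨he, _⟩ <;> rw [he] <;> linarith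
        have htu : IsUnit (Ψ t) := hlt t ht0 htc
        obtain ⟨u, hu⟩ := htu
        have hφt : φ t = ↑u⁻¹ := by simp only [hφdef, ← hu, Ring.inverse_unit]
        have hdist : dist t c < δ := by
          rw [Real.dist_eq, abs_of_nonpos (by linarith)]
          rw [ht]; rcases max_cases 0 (c - δ/2) with ⟨he, h2⟩ | ⟨he, _⟩ <;> rw [he] <;> linarith
        have hnear : ‖Ψ c - ↑u‖ < ‖(↑u⁻¹ : A)‖⁻¹ := by
          have h1 : ‖Ψ t - Ψ c‖ < B⁻¹ := by
            rw [← dist_eq_norm]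
            exact hδ ⟨ht0, le_trans htc.le hc1⟩ hdist
          have h2 : ‖(↑u⁻¹ : A)‖ ≤ B := by rw [← hφt]; exact hbnd t ht0 htc
          have h3 : 0 < ‖(↑u⁻¹ : A)‖ := Units.norm_pos u⁻¹
          have h4 : B⁻¹ ≤ ‖(↑u⁻¹ : A)‖⁻¹ := by
            apply inv_anti₀ h3 h2
          calc ‖Ψ c - ↑u‖ = ‖Ψ t - Ψ c‖ := by rw [hu, norm_sub_rev]
            _ < B⁻¹ := h1
            _ ≤ _ := h4
        exact (Units.ofNearby u (Ψ c) hnear).isUnit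
    have hcT : c ∈ T := ⟨⟨hc0, hc1⟩, fun s hs =>
      hs.2.lt_or_eq.elim (fun h' => hlt s hs.1 h') fun h' => h' ▸ hcu⟩
    have hceq : c = 1 := by
      by_contra hne
      have hc1' : c < 1 := lt_of_le_of_ne hc1 hne
      have hmem : {x : A | IsUnit x} ∈ nhds (Ψ c) := Units.isOpen.mem_nhds hcu
      have h2 : Ψ ⁻¹' {x : A | IsUnit x} ∈ nhdsWithin c (Icc (0:ℝ) 1) :=
        (hΨ c ⟨hc0, hc1⟩).continuousWithinAt hmem
      rw [Metric.mem_nhdsWithin_iff] at h2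
      obtain ⟨δ, hδ0, hδ⟩ := h2
      set t := min 1 (c + δ/2) with ht
      have htc : c < t := by
        rw [ht]; rcases min_cases 1 (c + δ/2) with ⟨he, _⟩ | ⟨he, _⟩ <;> rw [he] <;> linarith
      have htT : t ∈ T := by
        refine ⟨⟨le_trans hc0 htc.le, min_le_left _ _⟩, fun s hs => ?_⟩
        rcases le_or_gt s c with hsc | hsc
        · exact hcT.2 s ⟨hs.1, hsc⟩
        · refine hδ ⟨?_, ⟨hs.1, le_trans hs.2 (min_le_left _ _)⟩⟩
          rw [Metric.mem_ball, Real.dist_eq, abs_of_nonneg (by linarith)]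
          have : s ≤ c + δ/2 := le_trans hs.2 (min_le_right _ _)
          linarith
      exact absurd (le_csSup hTbdd htT) (not_le.2 htc)
    intro t htmem
    rcases htmem.2.lt_or_eq with h' | h'
    · exact hlt t htmem.1 (hceq ▸ h')
    · rw [h', ← hceq]; exact hcu
  -- derivative and continuity of φ on all of [0,1]
  have hφd : ∀ x ∈ Icc (0:ℝ) 1, HasDerivWithinAt φ (φ x * η x) (Icc (0:ℝ) 1) x :=
    fun x hx => hφderiv x hx (unitAll x hx)
  -- g coincides with Ψ * (g₀ * φ) on [0,1]
  have hgG : ∀ θ ∈ Icc (0:ℝ) 1, g θ = Ψ θ * (g₀ * φ θ) := by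
    intro θ hθ
    have hu := unitAll θ hθ
    have hC : Commute g₀ L := hg₀
    have hC2 : Commute g₀ (-(θ • L)) := (hC.smul_right θ).neg_right
    have hC3 : Commute g₀ (NormedSpace.exp (-(θ • L))) := hC2.exp_right
    have hee : NormedSpace.exp (-(θ • L)) * NormedSpace.exp (θ • L) = 1 := by
      rw [← NormedSpace.exp_add_of_commute (Commute.refl (θ • L)).neg_left, neg_add_cancel,
        NormedSpace.exp_zero]
    have hee' : NormedSpace.exp (θ • L) * NormedSpace.exp (-(θ • L)) = 1 := by
      rw [← NormedSpace.exp_add_of_commute (Commute.refl (θ • L)).neg_right, add_neg_cancel,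
        NormedSpace.exp_zero]
    have hΨφ : Ψ θ * φ θ = 1 := Ring.mul_inverse_cancel _ hu
    have hφΨ : φ θ * Ψ θ = 1 := Ring.inverse_mul_cancel _ hu
    have hval : h θ * (NormedSpace.exp (θ • L) * φ θ) = 1 := by
      rw [hdef θ, mul_assoc, ← mul_assoc (NormedSpace.exp (-(θ • L))), hee, one_mul, hΨφ]
    have hinvval : (NormedSpace.exp (θ • L) * φ θ) * h θ = 1 := by
      rw [hdef θ, mul_assoc, ← mul_assoc (φ θ), hφΨ, one_mul, hee']
    set u : Aˣ := ⟨h θ, NormedSpace.exp (θ • L) * φ θ, hval, hinvval⟩ with hudef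
    have hrinv : Ring.inverse (h θ) = NormedSpace.exp (θ • L) * φ θ := by
      have : Ring.inverse (u : A) = ↑u⁻¹ := Ring.inverse_unit u
      simpa [hudef] using this
    rw [gdef θ, hrinv, hdef θ]
    calc Ψ θ * NormedSpace.exp (-(θ • L)) * g₀ * (NormedSpace.exp (θ • L) * φ θ)
        = Ψ θ * (NormedSpace.exp (-(θ • L)) * g₀) * (NormedSpace.exp (θ • L) * φ θ) := by
          rw [mul_assoc (Ψ θ)]
      _ = Ψ θ * (g₀ * NormedSpace.exp (-(θ • L))) * (NormedSpace.exp (θ • L) * φ θ) := by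
          rw [hC3.eq]
      _ = Ψ θ * (g₀ * ((NormedSpace.exp (-(θ • L)) * NormedSpace.exp (θ • L)) * φ θ)) := by
          simp only [mul_assoc]
      _ = Ψ θ * (g₀ * φ θ) := by rw [hee, one_mul]
  -- the candidate derivative
  refine ⟨⟨fun θ => g θ * η θ - η θ * g θ, ?_, ?_, ?_⟩, ?_, ?_⟩
  · intro θ hθ
    have hG : HasDerivWithinAt (fun y => Ψ y * (g₀ * φ y))
        (-(η θ * Ψ θ) * (g₀ * φ θ) + Ψ θ * (g₀ * (φ θ * η θ))) (Icc (0:ℝ) 1) θ :=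
      (hΨ θ hθ).mul ((hφd θ hθ).const_mul g₀)
    have hgd : HasDerivWithinAt g
        (-(η θ * Ψ θ) * (g₀ * φ θ) + Ψ θ * (g₀ * (φ θ * η θ))) (Icc (0:ℝ) 1) θ :=
      hG.congr (fun y hy => hgG y hy) (hgG θ hθ)
    convert hgd using 1
    show g θ * η θ - η θ * g θ = _
    rw [hgG θ hθ]
    noncomm_ring
  · have hgc : ContinuousOn g (Icc 0 1) := by
      intro x hx
      exact ((hΨ x hx).mul ((hφd x hx).const_mul g₀)).continuousWithinAt.congr
        (fun y hy => hgG y hy) (hgG x hx)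
    exact (hgc.mul hη).sub (hη.mul hgc)
  · intro θ hθ
    noncomm_ring
  · rw [gdef 0, hdef 0]
    simp [hΨ0, Ring.inverse_one]
  · have h1 : h 1 = 1 := by
      rw [hdef 1, one_smul, ← hL,
        ← NormedSpace.exp_add_of_commute (Commute.refl L).neg_right, add_neg_cancel,
        NormedSpace.exp_zero]
    rw [gdef 1, h1]
    simp [Ring.inverse_one]
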